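/- Let Z be the vector field on ℝ³ given by Z = Σ_{k=1}^{3} sin(2φ_k) sin(φ_ℓ + φ_m − φ_k) ∂/∂φ_k, where (k,ℓ,m) runs over cyclic permutations of (1,2,3). For each cyclic permutation (k,ℓ,m) define J_{ℓm}(φ) = −tan(φ_ℓ − φ_m) tan(φ_k). Then Z(J_{ℓm}) = 0 wherever J_{ℓm} is defined (i.e. the derivative of J_{ℓm} along Z vanishes): sin(2φ_1) sin(φ_2+φ_3−φ_1) ∂_1 J_{ℓm} + sin(2φ_2) sin(φ_3+φ_1−φ_2) ∂_2 J_{ℓm} + sin(2φ_3) sin(φ_1+φ_2−φ_3) ∂_3 J_{ℓm} = 0. -/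

import Mathlib

open Real

lemma pts (X Y : ℝ) : 2 * sin X * sin Y = cos (X - Y) - cos (X + Y) := by
  rw [cos_sub, cos_add]; ring

lemma key (a b c : ℝ) :
    2 * sin (b+c-a) * sin (b-c) * cos (b-c)
      = sin (2*c) * sin (a+b-c) - sin (2*b) * sin (c+a-b) := by
  have e1 : 2 * sin (b+c-a) * sin (2*b-2*c) = cos (3*c-b-a) - cos (3*b-c-a) := by
    have h := pts (b+c-a) (2*b-2*c)
    rw [show (b+c-a)-(2*b-2*c) = 3*c-b-a by ring,
        show (b+c-a)+(2*b-2*c) = 3*b-c-a by ring] at h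
    exact h
  have e2 : 2 * sin (2*c) * sin (a+b-c) = cos (3*c-b-a) - cos (a+b+c) := by
    have h := pts (2*c) (a+b-c)
    rw [show (2*c)-(a+b-c) = 3*c-b-a by ring,
        show (2*c)+(a+b-c) = a+b+c by ring] at h
    exact h
  have e3 : 2 * sin (2*b) * sin (c+a-b) = cos (3*b-c-a) - cos (a+b+c) := by
    have h := pts (2*b) (c+a-b)
    rw [show (2*b)-(c+a-b) = 3*b-c-a by ring,
        show (2*b)+(c+a-b) = a+b+c by ring] at h
    exact h
  have e0 : sin (2*b-2*c) = 2 * sin (b-c) * cos (b-c) := by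
    rw [show 2*b-2*c = 2*(b-c) by ring, sin_two_mul]
  rw [e0] at e1
  linarith [e1, e2, e3]

lemma dconst (k x : ℝ) (hx : cos x ≠ 0) :
    deriv (fun t => -tan k * tan t) x = -tan k * (1 / cos x ^ 2) :=
  ((Real.hasDerivAt_tan hx).const_mul (-tan k)).deriv

lemma dleft (u k x : ℝ) (h : cos (x - u) ≠ 0) :
    deriv (fun t => -tan (t - u) * tan k) x = -(1 / cos (x - u) ^ 2) * tan k := by
  have h1 : HasDerivAt (fun t : ℝ => t - u) 1 x := (hasDerivAt_id x).sub_const u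
  have h2 := ((Real.hasDerivAt_tan h).comp x h1).neg.mul_const (tan k)
  simpa using h2.deriv

lemma dright (u k x : ℝ) (h : cos (u - x) ≠ 0) :
    deriv (fun t => -tan (u - t) * tan k) x = (1 / cos (u - x) ^ 2) * tan k := by
  have h1 : HasDerivAt (fun t : ℝ => u - t) (-1) x := (hasDerivAt_id x).const_sub u
  have h2 := ((Real.hasDerivAt_tan h).comp x h1).neg.mul_const (tan k)
  simpa using h2.deriv

/-- The Sklyanin parameters J_{ℓm}(φ) = −tan(φ_ℓ−φ_m)·tan(φ_k) are constant
along the flow of the vector field Z = Σ_k sin(2φ_k) sin(φ_ℓ+φ_m−φ_k) ∂/∂φ_k :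
the derivative of each J_{ℓm} along Z vanishes wherever the tangents are defined. -/
theorem stmt_5 (a b c : ℝ)
    (h1 : cos a ≠ 0) (h2 : cos b ≠ 0) (h3 : cos c ≠ 0)
    (h12 : cos (a - b) ≠ 0) (h23 : cos (b - c) ≠ 0) (h31 : cos (c - a) ≠ 0) :
    ∀ J ∈ [(fun x y z : ℝ => -tan (y - z) * tan x),
           (fun x y z : ℝ => -tan (z - x) * tan y),
           (fun x y z : ℝ => -tan (x - y) * tan z)],
      sin (2*a) * sin (b + c - a) * deriv (fun t => J t b c) a
        + sin (2*b) * sin (c + a - b) * deriv (fun t => J a t c) b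
        + sin (2*c) * sin (a + b - c) * deriv (fun t => J a b t) c = 0 := by
  intro J hJ
  have h32 : cos (c - b) ≠ 0 := by rw [show c - b = -(b-c) by ring, cos_neg]; exact h23
  have h13 : cos (a - c) ≠ 0 := by rw [show a - c = -(c-a) by ring, cos_neg]; exact h31
  have h21 : cos (b - a) ≠ 0 := by rw [show b - a = -(a-b) by ring, cos_neg]; exact h12
  simp only [List.mem_cons, List.not_mem_nil, or_false] at hJ
  rcases hJ with rfl | rfl | rfl
  · simp only
    rw [dconst (b-c) a h1, dleft c a b h23, dright b a c h23]
    have k1 := key a b c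
    rw [tan_eq_sin_div_cos, tan_eq_sin_div_cos, sin_two_mul a]
    field_simp
    linear_combination (-(sin a)) * k1
  · simp only
    rw [dright c b a h31, dconst (c-a) b h2, dleft a b c h31]
    have k1 := key b c a
    rw [tan_eq_sin_div_cos, tan_eq_sin_div_cos, sin_two_mul b]
    field_simp
    linear_combination (-(sin b)) * k1
  · simp only
    rw [dleft b c a h12, dright a c b h12, dconst (a-b) c h3]
    have k1 := key c a b
    rw [tan_eq_sin_div_cos, tan_eq_sin_div_cos, sin_two_mul c]
    field_simp
    linear_combination (-(sin c)) * k1
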